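/- For every action symbol a and every EPDL formula φ, the formula K⦗a⦘φ ↔ ⟨?K⟨a⟩⊤;a⟩Kφ is valid on uncertainty maps, where ⦗a⦘φ abbreviates [a]φ ∧ ⟨a⟩φ. -/
import Mathlib


mutual
/-- Formulas of EPDL. -/
inductive EForm (P A : Type) : Type
  | top : EForm P A
  | atom : P → EForm P A
  | neg : EForm P A → EForm P A
  | and : EForm P A → EForm P A → EForm P A
  | box : EProg P A → EForm P A → EForm P A
  | know : EForm P A → EForm P A
/-- Programs of EPDL. -/
inductive EProg (P A : Type) : Type
  | act : A → EProg P A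
  | test : EForm P A → EProg P A
  | seq : EProg P A → EProg P A → EProg P A
  | choice : EProg P A → EProg P A → EProg P A
  | star : EProg P A → EProg P A
end

namespace EForm
variable {P A : Type}
/-- φ ∨ ψ := ¬(¬φ ∧ ¬ψ) -/
def or (φ ψ : EForm P A) : EForm P A := neg (and (neg φ) (neg ψ))
/-- φ → ψ := ¬φ ∨ ψ -/
def imp (φ ψ : EForm P A) : EForm P A := or (neg φ) ψ
def iff (φ ψ : EForm P A) : EForm P A := and (imp φ ψ) (imp ψ φ)
/-- ⟨π⟩φ := ¬[π]¬φ -/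
def dia (π : EProg P A) (φ : EForm P A) : EForm P A := neg (box π (neg φ))
/-- ⦗π⦘φ := [π]φ ∧ ⟨π⟩φ -/
def bbox (π : EProg P A) (φ : EForm P A) : EForm P A := and (box π φ) (dia π φ)
/-- K̂φ := ¬K¬φ -/
def hatK (φ : EForm P A) : EForm P A := neg (know (neg φ))
end EForm

/-- A Kripke model with labelled relations. -/
structure Kripke (P A : Type) where
  S : Type
  R : A → S → S → Prop
  V : S → P → Prop

namespace Kripke
variable {P A : Type}
/-- U|^a -/
def img (N : Kripke P A) (a : A) (U : Set N.S) : Set N.S := {t | ∃ u ∈ U, N.R a u t}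
/-- Iterated update U|^σ along a sequence of actions. -/
def updU (N : Kripke P A) : Set N.S → List A → Set N.S
  | U, [] => U
  | U, a :: σ => N.updU (N.img a U) σ
end Kripke

mutual
/-- Truth of an EPDL formula at a pointed uncertainty map, represented by the
(fixed) Kripke model `N`, an uncertainty set `U` and a state `s`. -/
def eSat {P A : Type} (N : Kripke P A) : Set N.S → N.S → EForm P A → Prop
  | _, _, .top => True
  | _, s, .atom p => N.V s p
  | U, s, .neg φ => ¬ eSat N U s φ
  | U, s, .and φ ψ => eSat N U s φ ∧ eSat N U s ψ
  | U, s, .box π φ => ∀ c : Set N.S × N.S, eRel N π (U, s) c → eSat N c.1 c.2 φ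
  | U, _, .know φ => ∀ u ∈ U, eSat N U u φ
/-- The relation ⟦π⟧ between pointed uncertainty maps (over a fixed Kripke model
`N`, a pointed uncertainty map is a pair of an uncertainty set and a state). -/
def eRel {P A : Type} (N : Kripke P A) : EProg P A → Set N.S × N.S → Set N.S × N.S → Prop
  | .act a, c, c' => c'.1 = N.img a c.1 ∧ N.R a c.2 c'.2
  | .test ψ, c, c' => c' = c ∧ eSat N c.1 c.2 ψ
  | .seq π₁ π₂, c, c' => ∃ d, eRel N π₁ c d ∧ eRel N π₂ d c'
  | .choice π₁ π₂, c, c' => eRel N π₁ c c' ∨ eRel N π₂ c c'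
  | .star π, c, c' => Relation.ReflTransGen (fun x y => eRel N π x y) c c'
end

/-- Validity: truth at every pointed uncertainty map. -/
def eValid {P A : Type} (φ : EForm P A) : Prop :=
  ∀ (N : Kripke P A) (U : Set N.S), U.Nonempty → ∀ s ∈ U, eSat N U s φ

/-- For every action symbol a and every EPDL formula φ, the formula
K⦗a⦘φ ↔ ⟨?K⟨a⟩⊤;a⟩Kφ is valid on uncertainty maps, where ⦗a⦘φ := [a]φ ∧ ⟨a⟩φ. -/
theorem know_bbox_valid {P A : Type} [Countable P] [Countable A]
    (a : A) (φ : EForm P A) :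
    eValid (EForm.iff (EForm.know (EForm.bbox (EProg.act a) φ))
      (EForm.dia
        (EProg.seq (EProg.test (EForm.know (EForm.dia (EProg.act a) EForm.top))) (EProg.act a))
        (EForm.know φ))) := by
  intro N U hU s hs
  simp only [EForm.iff, EForm.imp, EForm.or, EForm.bbox, EForm.dia, eSat, eRel]
  push_neg
  constructor
  · intro h
    obtain ⟨_, c, ⟨hc1, hR⟩, _⟩ := h s hs
    refine ⟨(N.img a U, c.2), ⟨(U, s), ⟨rfl, fun u hu => (h u hu).2.imp fun c hc => ⟨hc.1, trivial⟩⟩, rfl, hR⟩, ?_⟩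
    rintro t ⟨v, hv, hvt⟩
    exact (h v hv).1 (N.img a U, t) ⟨rfl, hvt⟩
  · rintro ⟨c, ⟨d, ⟨rfl, hK⟩, hc1, hR⟩, hall⟩ u hu
    rw [hc1] at hall
    constructor
    · rintro c' ⟨hc'1, hR'⟩
      rw [hc'1]
      exact hall c'.2 ⟨u, hu, hR'⟩
    · obtain ⟨c₂, ⟨hc₂1, hR₂⟩, _⟩ := hK u hu
      exact ⟨(N.img a U, c₂.2), ⟨rfl, hR₂⟩, hall c₂.2 ⟨u, hu, hR₂⟩⟩
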